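/- For the cycle graph C_n, the super domination number equals ⌈n/2⌉ if n ≡ 0 or 3 (mod 4), and equals ⌈(n+1)/2⌉ otherwise. -/

import Mathlib

/-- `S` is a super dominating set of `G`: it is dominating, and for every `u ∉ S`
there is `v ∈ S` whose neighbours outside `S` are exactly `{u}`. -/
def IsSuperDominatingSet {V : Type*} (G : SimpleGraph V) (S : Finset V) : Prop :=
  (∀ u ∉ S, ∃ v ∈ S, G.Adj v u) ∧
  ∀ u ∉ S, ∃ v ∈ S, ∀ w, (G.Adj v w ∧ w ∉ S) ↔ w = u

/-- The super domination number of `G`. -/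
noncomputable def superDominationNumber {V : Type*} [Fintype V] (G : SimpleGraph V) : ℕ :=
  sInf {n | ∃ S : Finset V, IsSuperDominatingSet G S ∧ S.card = n}

namespace SuperDomAux

open Finset SimpleGraph

variable {n : ℕ} [NeZero n]

lemma onevalI (hn : 3 ≤ n) : (1 : Fin n).val = 1 := by
  rw [Fin.val_one', Nat.mod_eq_of_lt (by omega)]

lemma addI (hn : 3 ≤ n) (u : Fin n) : (u + 1).val = if u.val + 1 = n then 0 else u.val + 1 := by
  rw [Fin.add_def]
  simp only [onevalI hn]
  split
  · next h => rw [h, Nat.mod_self]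
  · next h => exact Nat.mod_eq_of_lt (by omega)

lemma subI (hn : 3 ≤ n) (u : Fin n) : (u - 1).val = if u.val = 0 then n - 1 else u.val - 1 := by
  rw [Fin.sub_def]
  simp only [onevalI hn]
  split
  · next h => rw [h, Nat.add_zero, Nat.mod_eq_of_lt (by omega)]
  · next h =>
      rw [show n - 1 + u.val = n + (u.val - 1) by omega, Nat.add_mod_left,
        Nat.mod_eq_of_lt (by omega)]

lemma adjI (hn : 3 ≤ n) (u v : Fin n) : (cycleGraph n).Adj u v ↔ u = v + 1 ∨ v = u + 1 := by
  rw [cycleGraph_adj']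
  have h1 : ∀ a b : Fin n, (a - b).val = 1 ↔ a = b + 1 := by
    intro a b
    constructor
    · intro h
      have h2 : a - b = 1 := Fin.ext (by rw [h, onevalI hn])
      rw [sub_eq_iff_eq_add.mp h2, add_comm]
    · intro h; rw [h, add_sub_cancel_left, onevalI hn]
  rw [h1, h1]

lemma upperSDS (hn : 3 ≤ n) :
    IsSuperDominatingSet (cycleGraph n) (univ.filter (fun i : Fin n => i.val % 4 < 2)) := by
  have hsuper : ∀ u ∉ (univ.filter (fun i : Fin n => i.val % 4 < 2)),
      ∃ v ∈ univ.filter (fun i : Fin n => i.val % 4 < 2),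
      ∀ w, ((cycleGraph n).Adj v w ∧ w ∉ univ.filter (fun i : Fin n => i.val % 4 < 2)) ↔ w = u := by
    intro u hu
    simp only [mem_filter, mem_univ, true_and, not_lt] at hu ⊢
    have hun := u.isLt
    rcases (show u.val % 4 = 2 ∨ u.val % 4 = 3 by omega) with h2 | h3
    · refine ⟨u - 1, ?_, ?_⟩
      · rw [subI hn]; split <;> omega
      · intro w
        constructor
        · rintro ⟨hadj, hw⟩
          rw [adjI hn] at hadj
          rcases hadj with h | h
          · exfalso
            have hw2 : w = u - 1 - 1 := by rw [h, add_sub_cancel_right]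
            rw [hw2, subI hn, subI hn] at hw
            split_ifs at hw <;> omega
          · rw [h, sub_add_cancel]
        · rintro rfl
          refine ⟨?_, by omega⟩
          rw [adjI hn]
          right; rw [sub_add_cancel]
    · refine ⟨u + 1, ?_, ?_⟩
      · rw [addI hn]; split <;> omega
      · intro w
        constructor
        · rintro ⟨hadj, hw⟩
          rw [adjI hn] at hadj
          rcases hadj with h | h
          · rw [eq_sub_of_add_eq h.symm, add_sub_cancel_right]
          · exfalso
            rw [h, addI hn, addI hn] at hw
            split_ifs at hw <;> omega
        · rintro rfl
          refine ⟨?_, by omega⟩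
          rw [adjI hn]; left; rfl
  exact ⟨fun u hu => by
    obtain ⟨v, hv, hprop⟩ := hsuper u hu
    exact ⟨v, hv, ((hprop u).mpr rfl).1⟩, hsuper⟩

lemma rangeCount : ∀ m : ℕ, ((Finset.range m).filter (fun i => i % 4 < 2)).card
    = 2 * (m / 4) + min (m % 4) 2 := by
  intro m
  induction m with
  | zero => simp
  | succ k ih =>
      rw [Finset.range_add_one, Finset.filter_insert]
      split
      · next h =>
          rw [Finset.card_insert_of_notMem (by simp)]
          omega
      · next h => omega

lemma cardS (hn : 3 ≤ n) :
    (Finset.univ.filter (fun i : Fin n => i.val % 4 < 2)).card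
      = if n % 4 = 0 ∨ n % 4 = 3 then (n + 1) / 2 else (n + 2) / 2 := by
  have h : (Finset.univ.filter (fun i : Fin n => i.val % 4 < 2)).card
      = ((Finset.range n).filter (fun i => i % 4 < 2)).card := by
    apply Finset.card_nbij (fun a => a.val)
    · intro a ha
      simp only [Finset.mem_coe, Finset.mem_filter, Finset.mem_univ, true_and] at ha
      simp [Finset.mem_filter, Finset.mem_range, a.isLt, ha]; omega
    · intro a _ b _ hab
      exact Fin.ext hab
    · intro a ha
      simp only [Finset.coe_filter, Finset.mem_range, Set.mem_setOf_eq] at ha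
      exact ⟨⟨a, ha.1⟩, by simp [ha.2]; omega, rfl⟩
  rw [h, rangeCount]
  split <;> omega

lemma lb1 {V : Type*} [Fintype V] [DecidableEq V] {G : SimpleGraph V} {S : Finset V}
    (h : IsSuperDominatingSet G S) : Fintype.card V ≤ 2 * S.card := by
  classical
  choose f hfS hf using h.2
  set F : V → V := fun u => if hu : u ∉ S then f u hu else u with hF
  have hle : (univ \ S).card ≤ S.card := by
    apply Finset.card_le_card_of_injOn F
    · intro u hu
      rw [mem_coe, mem_sdiff] at hu
      rw [hF]; simp only [dif_pos hu.2]
      exact hfS u hu.2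
    · intro u1 hu1 u2 hu2 heq
      simp only [coe_sdiff, Set.mem_diff, mem_coe, coe_univ, Set.mem_univ, true_and] at hu1 hu2
      rw [hF] at heq
      simp only [dif_pos hu1, dif_pos hu2] at heq
      have h2 := (hf u2 hu2 u2).mpr rfl
      rw [← heq] at h2
      exact ((hf u1 hu1 u2).mp h2).symm
  have hcard : (univ \ S).card = Fintype.card V - S.card := by
    rw [Finset.card_sdiff_of_subset (subset_univ S), Finset.card_univ]
  have := Finset.card_le_card (subset_univ S)
  rw [Finset.card_univ] at this
  omega

open Fin.NatCast Fin.CommRing in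
lemma lb2 (hn : 3 ≤ n) (h4 : n % 4 = 2) {S : Finset (Fin n)}
    (h : IsSuperDominatingSet (cycleGraph n) S) : 2 * S.card ≠ n := by
  classical
  intro hcard
  choose f hfS hf using h.2
  set F : Fin n → Fin n := fun u => if hu : u ∉ S then f u hu else u with hF
  set out : Finset (Fin n) := univ \ S with hout
  have houtmem : ∀ w : Fin n, w ∈ out ↔ w ∉ S := by intro w; simp [hout]
  have houtcard : out.card = S.card := by
    rw [hout, Finset.card_sdiff_of_subset (subset_univ S), Finset.card_univ, Fintype.card_fin]; omega
  have hinj : Set.InjOn F out := by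
    intro u1 hu1 u2 hu2 heq
    rw [mem_coe, houtmem] at hu1 hu2
    rw [hF] at heq
    simp only [dif_pos hu1, dif_pos hu2] at heq
    have h2 := (hf u2 hu2 u2).mpr rfl
    rw [← heq] at h2
    exact ((hf u1 hu1 u2).mp h2).symm
  have himage : Finset.image F out = S := by
    apply Finset.eq_of_subset_of_card_le
    · intro v hv
      rw [Finset.mem_image] at hv
      obtain ⟨u, hu, rfl⟩ := hv
      rw [houtmem] at hu
      rw [hF]; simp only [dif_pos hu]
      exact hfS u hu
    · rw [Finset.card_image_of_injOn hinj, houtcard]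
  have key : ∀ v ∈ S, ∃ u, u ∉ S ∧ ∀ w, ((cycleGraph n).Adj v w ∧ w ∉ S) ↔ w = u := by
    intro v hv
    rw [← himage, Finset.mem_image] at hv
    obtain ⟨u, hu, hFu⟩ := hv
    rw [houtmem] at hu
    refine ⟨u, hu, ?_⟩
    have hFu' : F u = f u hu := by rw [hF]; simp only [dif_pos hu]
    rw [← hFu, hFu']
    exact hf u hu
  have hne : ∀ i : Fin n, (i - 1 : Fin n) ≠ i + 1 := by
    intro i hEq
    have h1 := subI hn i
    have h2 := addI hn i
    rw [hEq] at h1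
    have := i.isLt
    split_ifs at h1 h2 <;> omega
  have hadjsub : ∀ i : Fin n, (cycleGraph n).Adj i (i - 1) := by
    intro i; rw [adjI hn]; left; rw [sub_add_cancel]
  have hadjadd : ∀ i : Fin n, (cycleGraph n).Adj i (i + 1) := by
    intro i; rw [adjI hn]; right; rfl
  have hone : ∀ v ∈ S, (out.filter (fun w => (cycleGraph n).Adj v w)).card = 1 := by
    intro v hv
    obtain ⟨u, hu, hprop⟩ := key v hv
    rw [Finset.card_eq_one]
    refine ⟨u, ?_⟩
    ext w
    simp only [Finset.mem_filter, houtmem w, Finset.mem_singleton]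
    rw [← hprop w]; tauto
  have hsum : ∑ w ∈ out, (S.filter (fun v => (cycleGraph n).Adj v w)).card = S.card := by
    calc ∑ w ∈ out, (S.filter (fun v => (cycleGraph n).Adj v w)).card
        = ∑ w ∈ out, ∑ v ∈ S, if (cycleGraph n).Adj v w then 1 else 0 := by
          exact Finset.sum_congr rfl fun w _ => Finset.card_filter _ _
      _ = ∑ v ∈ S, ∑ w ∈ out, if (cycleGraph n).Adj v w then 1 else 0 := Finset.sum_comm
      _ = ∑ v ∈ S, (out.filter (fun w => (cycleGraph n).Adj v w)).card := by
          exact Finset.sum_congr rfl fun v _ => (Finset.card_filter _ _).symm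
      _ = ∑ v ∈ S, 1 := Finset.sum_congr rfl hone
      _ = S.card := by simp
  have hpos : ∀ w ∈ out, 1 ≤ (S.filter (fun v => (cycleGraph n).Adj v w)).card := by
    intro w hw
    rw [houtmem] at hw
    obtain ⟨v, hv, hadj⟩ := h.1 w hw
    exact Finset.card_pos.mpr ⟨v, by simp [Finset.mem_filter, hv, hadj]⟩
  have honeout : ∀ w ∈ out, (S.filter (fun v => (cycleGraph n).Adj v w)).card = 1 := by
    by_contra hcon
    push_neg at hcon
    obtain ⟨w0, hw0, hne0⟩ := hcon
    have hlt : ∑ _w ∈ out, 1 < ∑ w ∈ out, (S.filter (fun v => (cycleGraph n).Adj v w)).card :=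
      Finset.sum_lt_sum hpos ⟨w0, hw0, lt_of_le_of_ne (hpos w0 hw0) (Ne.symm hne0)⟩
    rw [Finset.sum_const, smul_eq_mul, mul_one, hsum, houtcard] at hlt
    exact lt_irrefl _ hlt
  have hxorS : ∀ v ∈ S, ((v - 1 ∈ S) ↔ (v + 1 ∉ S)) := by
    intro v hv
    obtain ⟨u, hu, hprop⟩ := key v hv
    have hu' : u = v - 1 ∨ u = v + 1 := by
      have hadj := ((hprop u).mpr rfl).1
      rw [adjI hn] at hadj
      rcases hadj with h' | h'
      · left; rw [h', add_sub_cancel_right]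
      · right; exact h'
    rcases hu' with rfl | rfl
    · have hin : v + 1 ∈ S := by
        by_contra hnot
        exact hne v ((hprop (v+1)).mp ⟨hadjadd v, hnot⟩).symm
      tauto
    · have hin : v - 1 ∈ S := by
        by_contra hnot
        exact hne v ((hprop (v-1)).mp ⟨hadjsub v, hnot⟩)
      tauto
  have hxorOut : ∀ w, w ∉ S → ((w - 1 ∈ S) ↔ (w + 1 ∉ S)) := by
    intro w hw
    have hcard1 := honeout w ((houtmem w).mpr hw)
    rw [Finset.card_eq_one] at hcard1
    obtain ⟨v0, hv0⟩ := hcard1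
    have ha1 : (cycleGraph n).Adj (w - 1) w := by
      rw [adjI hn]; right; rw [sub_add_cancel]
    have ha2 : (cycleGraph n).Adj (w + 1) w := by
      rw [adjI hn]; left; rfl
    constructor
    · intro h1 h2
      have m1 : (w - 1) ∈ S.filter (fun v => (cycleGraph n).Adj v w) := by
        simp [Finset.mem_filter, h1, ha1]
      have m2 : (w + 1) ∈ S.filter (fun v => (cycleGraph n).Adj v w) := by
        simp [Finset.mem_filter, h2, ha2]
      rw [hv0, Finset.mem_singleton] at m1 m2
      exact hne w (m1.trans m2.symm)
    · intro h2
      by_contra h1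
      have hv0mem : v0 ∈ S.filter (fun v => (cycleGraph n).Adj v w) := by
        rw [hv0]; exact Finset.mem_singleton_self _
      rw [Finset.mem_filter] at hv0mem
      obtain ⟨hv0S, hv0adj⟩ := hv0mem
      rw [adjI hn] at hv0adj
      rcases hv0adj with h' | h'
      · rw [h'] at hv0S; exact h2 hv0S
      · exact h1 (by rwa [show v0 = w - 1 by rw [h', add_sub_cancel_right]] at hv0S)
  have hstep : ∀ j : Fin n, (j + 2 ∈ S ↔ j ∉ S) := by
    intro j
    have hx : ((j + 1) - 1 ∈ S) ↔ ((j + 1) + 1 ∉ S) := by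
      by_cases hj : j + 1 ∈ S
      · exact hxorS _ hj
      · exact hxorOut _ hj
    rw [add_sub_cancel_right, show (j + 1) + 1 = j + 2 by ring] at hx
    tauto
  have hiter : ∀ m : ℕ, (((2 * m : ℕ) : Fin n) ∈ S ↔ (m % 2 = 0 ↔ (0 : Fin n) ∈ S)) := by
    intro m
    induction m with
    | zero => simp
    | succ k ih =>
        have hc : ((2 * (k + 1) : ℕ) : Fin n) = ((2 * k : ℕ) : Fin n) + 2 := by
          push_cast; ring
        rw [hc, hstep]
        have hp : ((k + 1) % 2 = 0) ↔ ¬(k % 2 = 0) := by omega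
        tauto
  have hfin := hiter (n / 2)
  rw [show 2 * (n / 2) = n by omega, Fin.natCast_self] at hfin
  have hodd : ¬((n / 2) % 2 = 0) := by omega
  tauto

end SuperDomAux

open SuperDomAux Finset SimpleGraph in
/-- for the cycle `C_n`, `γ_sp(C_n) = ⌈n/2⌉` if `n ≡ 0, 3 (mod 4)`,
and `⌈(n+1)/2⌉` otherwise. -/
theorem stmt_2 (n : ℕ) (hn : 3 ≤ n) :
    superDominationNumber (SimpleGraph.cycleGraph n) =
      if n % 4 = 0 ∨ n % 4 = 3 then (n + 1) / 2 else (n + 2) / 2 := by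
  haveI : NeZero n := ⟨by omega⟩
  classical
  set t := if n % 4 = 0 ∨ n % 4 = 3 then (n + 1) / 2 else (n + 2) / 2 with ht
  have hmem : t ∈ {m | ∃ S : Finset (Fin n),
      IsSuperDominatingSet (cycleGraph n) S ∧ S.card = m} :=
    ⟨univ.filter (fun i : Fin n => i.val % 4 < 2), upperSDS hn, (cardS hn).trans ht.symm⟩
  rw [superDominationNumber]
  apply le_antisymm
  · exact Nat.sInf_le hmem
  · apply le_csInf ⟨t, hmem⟩
    rintro m ⟨S, hS, rfl⟩
    have h1 := lb1 hS
    rw [Fintype.card_fin] at h1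
    by_cases hc : n % 4 = 0 ∨ n % 4 = 3
    · rw [ht, if_pos hc]; omega
    · rw [ht, if_neg hc]
      rcases (show n % 4 = 1 ∨ n % 4 = 2 by omega) with h | h
      · omega
      · have h2 := lb2 hn h hS
        omega
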